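/- Let α ∈ ℤ_{≥0}^n. If β ∈ ℤ_{≥0}^n is an exponent vector of the key polynomial κ_α(x), then β ≤_κ α. -/

import Mathlib

open MvPolynomial in
/-- The operator `s_i` (here general `s_{i,j}`): exchange the variables `x i` and `x j`
in a polynomial. -/
noncomputable def swapVars (n : ℕ) (i j : Fin n) (f : MvPolynomial (Fin n) ℤ) :
    MvPolynomial (Fin n) ℤ :=
  MvPolynomial.rename (Equiv.swap i j) f

open MvPolynomial in
/-- `κ` is the family of key polynomials: if `α` is weakly decreasing then
`κ α = x^α`; otherwise, if `α i < α (i+1)` and `α'` is obtained from `α` by exchanging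
these two parts, then `κ α = ∂_i (x_i * κ α')`, which is equivalently recorded by
`(x_i - x_{i+1}) * κ α = x_i * κ α' - s_i (x_i * κ α')`. -/
def IsKeyFamily (n : ℕ) (κ : (Fin n → ℕ) → MvPolynomial (Fin n) ℤ) : Prop :=
  (∀ α : Fin n → ℕ, (∀ i j : Fin n, i ≤ j → α j ≤ α i) → κ α = ∏ i, X i ^ α i) ∧
  (∀ (α : Fin n → ℕ) (i j : Fin n), (i : ℕ) + 1 = (j : ℕ) → α i < α j →
    (X i - X j) * κ α =
      X i * κ (α ∘ Equiv.swap i j) - swapVars n i j (X i * κ (α ∘ Equiv.swap i j)))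

/-- One move generating the order `≤_κ`: from `γ` we may pass to `t_{i,j} γ`
(exchange the `i`-th and `j`-th entries) provided `γ i < γ j`, or to
`m_{i,j} γ = γ + e_i - e_j` provided `γ i < γ j - 1`. -/
def KeyStep (n : ℕ) (γ δ : Fin n → ℕ) : Prop :=
  ∃ i j : Fin n, i < j ∧
    ((γ i < γ j ∧ δ = γ ∘ Equiv.swap i j) ∨
     (γ i + 1 < γ j ∧
       δ = Function.update (Function.update γ i (γ i + 1)) j (γ j - 1)))

/-- `β ≤_κ α` : `β` is obtained from `α` by a finite sequence of moves. -/
def KeyLe (n : ℕ) (β α : Fin n → ℕ) : Prop :=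
  Relation.ReflTransGen (KeyStep n) α β

namespace KeyAux

variable {n : ℕ}

lemma keyStep_swap {k l : Fin n} (hkl : k < l) {γ δ : Fin n → ℕ}
    (h : γ k < γ l) (e1 : δ k = γ l) (e2 : δ l = γ k)
    (e3 : ∀ m, m ≠ k → m ≠ l → δ m = γ m) : KeyStep n γ δ := by
  refine ⟨k, l, hkl, Or.inl ⟨h, ?_⟩⟩
  funext m
  rcases eq_or_ne m k with rfl | hmk
  · simpa [Equiv.swap_apply_left] using e1
  rcases eq_or_ne m l with rfl | hml
  · simpa [Equiv.swap_apply_right] using e2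
  · simpa [Equiv.swap_apply_of_ne_of_ne hmk hml] using e3 m hmk hml

lemma keyStep_move {k l : Fin n} (hkl : k < l) {γ δ : Fin n → ℕ}
    (h : γ k + 1 < γ l) (e1 : δ k = γ k + 1) (e2 : δ l = γ l - 1)
    (e3 : ∀ m, m ≠ k → m ≠ l → δ m = γ m) : KeyStep n γ δ := by
  have hne : k ≠ l := ne_of_lt hkl
  refine ⟨k, l, hkl, Or.inr ⟨h, ?_⟩⟩
  funext m
  rcases eq_or_ne m l with rfl | hml
  · simpa using e2
  rcases eq_or_ne m k with rfl | hmk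
  · simp [Function.update_apply, hml, hne.symm]
    simpa using e1
  · simp [Function.update_apply, hml, hmk]
    exact e3 m hmk hml

lemma reach_m {i j : Fin n} (hij : i < j) :
    ∀ (k : ℕ) (γ β : Fin n → ℕ), (∀ m, m ≠ i → m ≠ j → β m = γ m) →
    β i + β j = γ i + γ j → γ i + k = β i → β i ≤ β j → KeyLe n β γ := by
  have hne : i ≠ j := ne_of_lt hij
  intro k
  induction k with
  | zero =>
    intro γ β hoff hsum hi hle
    have : β = γ := by
      funext m
      rcases eq_or_ne m i with rfl | hmi
      · omega
      rcases eq_or_ne m j with rfl | hmj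
      · omega
      · exact hoff m hmi hmj
    rw [this]
    exact Relation.ReflTransGen.refl
  | succ k ih =>
    intro γ β hoff hsum hi hle
    have hcond : γ i + 1 < γ j := by omega
    set γ' := Function.update (Function.update γ i (γ i + 1)) j (γ j - 1) with hγ'
    have hstep : KeyStep n γ γ' := ⟨i, j, hij, Or.inr ⟨hcond, rfl⟩⟩
    have hγ'i : γ' i = γ i + 1 := by simp [hγ', Function.update_apply, hne]
    have hγ'j : γ' j = γ j - 1 := by simp [hγ']
    have hγ'o : ∀ m, m ≠ i → m ≠ j → γ' m = γ m := by
      intro m hmi hmj; simp [hγ', Function.update_apply, hmi, hmj]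
    refine Relation.ReflTransGen.head hstep (ih γ' β ?_ ?_ ?_ hle)
    · intro m hmi hmj; rw [hoff m hmi hmj, hγ'o m hmi hmj]
    · omega
    · omega

lemma reach_seg {i j : Fin n} (hij : i < j) (γ β : Fin n → ℕ)
    (hoff : ∀ m, m ≠ i → m ≠ j → β m = γ m)
    (hsum : β i + β j = γ i + γ j) (h3 : γ i ≤ β i) (h4 : β i ≤ γ j) :
    KeyLe n β γ := by
  have hne : i ≠ j := ne_of_lt hij
  by_cases h : β i ≤ β j
  · exact reach_m hij (β i - γ i) γ β hoff hsum (by omega) h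
  · set β' : Fin n → ℕ := fun m => if m = i then β j else if m = j then β i else β m with hβ'
    have hβ'i : β' i = β j := by simp [hβ']
    have hβ'j : β' j = β i := by simp [hβ', hne.symm]
    have hβ'o : ∀ m, m ≠ i → m ≠ j → β' m = β m := by
      intro m hmi hmj; simp [hβ', hmi, hmj]
    have h1 : KeyLe n β' γ := by
      refine reach_m hij (β j - γ i) γ β' ?_ (by omega) (by omega) (by omega)
      intro m hmi hmj; rw [hβ'o m hmi hmj]; exact hoff m hmi hmj
    refine h1.tail (keyStep_swap hij (by omega) (by omega) (by omega) ?_)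
    intro m hmi hmj; exact (hβ'o m hmi hmj).symm

def Seg (i j : Fin n) (δ β : Fin n → ℕ) : Prop :=
  (∀ m, m ≠ i → m ≠ j → β m = δ m) ∧ β i + β j = δ i + δ j ∧
    min (δ i) (δ j) ≤ β i ∧ β i ≤ max (δ i) (δ j)

lemma seg_self (i j : Fin n) (b : Fin n → ℕ) : Seg i j b b :=
  ⟨fun _ _ _ => rfl, rfl, by omega, by omega⟩

lemma seg_swap {i j : Fin n} (hne : i ≠ j) (b : Fin n → ℕ) :
    Seg i j b (fun m => if m = i then b j else if m = j then b i else b m) := by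
  refine ⟨fun m hmi hmj => by simp [hmi, hmj], ?_, ?_, ?_⟩ <;>
    simp [hne.symm] <;> omega

/-- the finishing move for the cross cases -/
lemma leaf {α b b'' β : Fin n → ℕ} {i j : Fin n} (hij : i < j)
    (ih : ∀ β', Seg i j b β' → KeyLe n β' α)
    (hseg : Seg i j b'' β)
    (β0 β1 : Fin n → ℕ)
    (h0 : Seg i j b β0)
    (h1 : KeyStep n β0 β1)
    (hoff1 : ∀ m, m ≠ i → m ≠ j → β1 m = b'' m)
    (h1i : β1 i = min (b'' i) (b'' j)) (h1j : β1 j = max (b'' i) (b'' j)) :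
    KeyLe n β α := by
  obtain ⟨hoff, hsum, hmin, hmax⟩ := hseg
  refine ((ih β0 h0).tail h1).trans (reach_seg hij β1 β ?_ (by omega) (by omega) (by omega))
  intro m hmi hmj
  rw [hoff m hmi hmj, hoff1 m hmi hmj]


def set2 (b : Fin n → ℕ) (i j : Fin n) (x y : ℕ) : Fin n → ℕ :=
  fun m => if m = i then x else if m = j then y else b m

def set3 (b : Fin n → ℕ) (i j c : Fin n) (x y z : ℕ) : Fin n → ℕ :=
  fun m => if m = i then x else if m = j then y else if m = c then z else b m

lemma seg_swap2 {i j : Fin n} (hne : i ≠ j) (b : Fin n → ℕ) :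
    Seg i j b (set2 b i j (b j) (b i)) := by
  refine ⟨fun m hmi hmj => by simp [set2, hmi, hmj], ?_, ?_, ?_⟩ <;>
    simp [set2, hne.symm] <;> omega

lemma cross_leaf {α b b'' β : Fin n → ℕ} {i j : Fin n} (c : Fin n)
    (hij : i < j) (hci : c ≠ i) (hcj : c ≠ j)
    (ih : ∀ β', Seg i j b β' → KeyLe n β' α)
    (hseg : Seg i j b'' β)
    (β0 : Fin n → ℕ) (h0 : Seg i j b β0)
    (mnv mxv wv : ℕ)
    (hmn : min (b'' i) (b'' j) = mnv) (hmx : max (b'' i) (b'' j) = mxv)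
    (hw : b'' c = wv)
    (h1 : KeyStep n β0 (set3 b i j c mnv mxv wv))
    (hoffE : ∀ m, m ≠ i → m ≠ j → m ≠ c → b'' m = b m) :
    KeyLe n β α := by
  have hne : i ≠ j := ne_of_lt hij
  refine leaf hij ih hseg β0 _ h0 h1 ?_ ?_ ?_
  · intro m hmi hmj
    rcases eq_or_ne m c with rfl | hmc
    · simp [set3, hmi, hmj, hw]
    · simp [set3, hmi, hmj, hmc, hoffE m hmi hmj hmc]
  · simp [set3, hmn]
  · simp [set3, hne.symm, hmx]


lemma claimC {i j : Fin n} (hij1 : (i : ℕ) + 1 = (j : ℕ)) (α : Fin n → ℕ)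
    (hα : α i < α j) {δ : Fin n → ℕ} (hδ : KeyLe n δ (α ∘ Equiv.swap i j)) :
    ∀ β, Seg i j δ β → KeyLe n β α := by
  have hij : i < j := by rw [Fin.lt_def]; omega
  have hne : i ≠ j := ne_of_lt hij
  induction hδ with
  | refl =>
    intro β hseg
    obtain ⟨hoff, hsum, hmin, hmax⟩ := hseg
    have e1 : (α ∘ Equiv.swap i j) i = α j := by simp
    have e2 : (α ∘ Equiv.swap i j) j = α i := by simp
    have e3 : ∀ m, m ≠ i → m ≠ j → (α ∘ Equiv.swap i j) m = α m := fun m hmi hmj => by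
      simp [Equiv.swap_apply_of_ne_of_ne hmi hmj]
    rw [e1, e2] at hsum hmin hmax
    refine reach_seg hij α β ?_ (by omega) (by omega) (by omega)
    intro m hmi hmj; rw [hoff m hmi hmj, e3 m hmi hmj]
  | @tail b E hb hstep ih =>
    intro β hseg
    obtain ⟨k, l, hkl, hmv⟩ := hstep
    have hklne : k ≠ l := ne_of_lt hkl
    rcases eq_or_ne i k with rfl | hik
    · rcases eq_or_ne j l with rfl | hlj2
      · -- P0 : pair (i,j)
        rcases hmv with ⟨hlt, rfl⟩ | ⟨hlt, rfl⟩
        · refine ih β ?_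
          obtain ⟨hoff, hsum, hmin, hmax⟩ := hseg
          simp only [Function.comp_apply, Equiv.swap_apply_left, Equiv.swap_apply_right]
            at hsum hmin hmax
          refine ⟨fun m hmi hmj => ?_, by omega, by omega, by omega⟩
          rw [hoff m hmi hmj]
          simp [Equiv.swap_apply_of_ne_of_ne hmi hmj]
        · refine ih β ?_
          obtain ⟨hoff, hsum, hmin, hmax⟩ := hseg
          have hEi : Function.update (Function.update b i (b i + 1)) j (b j - 1) i
              = b i + 1 := by simp [Function.update_apply, hne]
          have hEj : Function.update (Function.update b i (b i + 1)) j (b j - 1) j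
              = b j - 1 := by simp
          rw [hEi, hEj] at hsum hmin hmax
          refine ⟨fun m hmi hmj => ?_, by omega, by omega, by omega⟩
          rw [hoff m hmi hmj]
          simp [Function.update_apply, hmi, hmj]
      · -- P1 : pair (i, c) with c = l, j < l
        have hlj : l ≠ j := Ne.symm hlj2
        have hjl : j < l := by
          rw [Fin.lt_def] at hkl ⊢
          have : (l : ℕ) ≠ (j : ℕ) := fun h => hlj (Fin.ext h)
          omega
        have hli : l ≠ i := hklne.symm
        have hil : i < l := hkl
        rcases hmv with ⟨hlt, rfl⟩ | ⟨hlt, rfl⟩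
        · -- t-move
          have hEi : (b ∘ Equiv.swap i l) i = b l := by simp
          have hEl : (b ∘ Equiv.swap i l) l = b i := by simp
          have hEj : (b ∘ Equiv.swap i l) j = b j := by
            simp [Equiv.swap_apply_of_ne_of_ne hne.symm (ne_of_lt hjl)]
          have hEo : ∀ m, m ≠ i → m ≠ j → m ≠ l → (b ∘ Equiv.swap i l) m = b m :=
            fun m hmi _ hml => by simp [Equiv.swap_apply_of_ne_of_ne hmi hml]
          rcases le_or_gt (b l) (b j) with hc | hc
          · refine cross_leaf l hij hli hlj ih hseg b (seg_self i j b)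
              (b l) (b j) (b i) (by rw [hEi, hEj]; omega) (by rw [hEi, hEj]; omega) hEl
              (keyStep_swap hil hlt ?_ ?_ ?_) hEo
            · simp [set3]
            · simp [set3, hli, hlj]
            · intro m hmi hml
              rcases eq_or_ne m j with rfl | hmj
              · simp [set3, hne.symm]
              · simp [set3, hmi, hmj, hml]
          · refine cross_leaf l hij hli hlj ih hseg _ (seg_swap2 hne b)
              (b j) (b l) (b i) (by rw [hEi, hEj]; omega) (by rw [hEi, hEj]; omega) hEl
              (keyStep_swap hjl ?_ ?_ ?_ ?_) hEo
            · simpa [set2, hne.symm, hli, hlj] using hlt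
            · simp [set3, set2, hne.symm, hli, hlj]
            · simp [set3, set2, hli, hlj, hne.symm]
            · intro m hmj hml
              rcases eq_or_ne m i with rfl | hmi
              · simp [set3, set2]
              · simp [set3, set2, hmi, hmj, hml]
        · -- m-move
          have hEi : Function.update (Function.update b i (b i + 1)) l (b l - 1) i
              = b i + 1 := by simp [Function.update_apply, hklne]
          have hEl : Function.update (Function.update b i (b i + 1)) l (b l - 1) l
              = b l - 1 := by simp
          have hEj : Function.update (Function.update b i (b i + 1)) l (b l - 1) j
              = b j := by simp [Function.update_apply, hne.symm, ne_of_lt hjl]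
          have hEo : ∀ m, m ≠ i → m ≠ j → m ≠ l →
              Function.update (Function.update b i (b i + 1)) l (b l - 1) m = b m :=
            fun m hmi _ hml => by simp [Function.update_apply, hmi, hml]
          rcases le_or_gt (b i + 1) (b j) with hc | hc
          · refine cross_leaf l hij hli hlj ih hseg b (seg_self i j b)
              (b i + 1) (b j) (b l - 1) (by rw [hEi, hEj]; omega) (by rw [hEi, hEj]; omega)
              hEl (keyStep_move hil hlt ?_ ?_ ?_) hEo
            · simp [set3]
            · simp [set3, hli, hlj]
            · intro m hmi hml
              rcases eq_or_ne m j with rfl | hmj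
              · simp [set3, hne.symm]
              · simp [set3, hmi, hmj, hml]
          · refine cross_leaf l hij hli hlj ih hseg _ (seg_swap2 hne b)
              (b j) (b i + 1) (b l - 1) (by rw [hEi, hEj]; omega) (by rw [hEi, hEj]; omega)
              hEl (keyStep_move hjl ?_ ?_ ?_ ?_) hEo
            · simp [set2, hne.symm, hli, hlj]; omega
            · simp [set3, set2, hne.symm, hli, hlj]
            · simp [set3, set2, hli, hlj, hne.symm]
            · intro m hmj hml
              rcases eq_or_ne m i with rfl | hmi
              · simp [set3, set2]
              · simp [set3, set2, hmi, hmj, hml]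
    · have hki : k ≠ i := Ne.symm hik
      rcases eq_or_ne j k with rfl | hjk2
      · -- P2 : pair (j, c) with c = l > j
        have hjl : j < l := hkl
        have hli : l ≠ i := fun h => (ne_of_lt (lt_trans hij hjl)) h.symm
        have hlj : l ≠ j := hklne.symm
        have hil : i < l := lt_trans hij hjl
        rcases hmv with ⟨hlt, rfl⟩ | ⟨hlt, rfl⟩
        · have hEj : (b ∘ Equiv.swap j l) j = b l := by simp
          have hEl : (b ∘ Equiv.swap j l) l = b j := by simp
          have hEi : (b ∘ Equiv.swap j l) i = b i := by
            simp [Equiv.swap_apply_of_ne_of_ne hne (ne_of_lt hil)]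
          have hEo : ∀ m, m ≠ i → m ≠ j → m ≠ l → (b ∘ Equiv.swap j l) m = b m :=
            fun m _ hmj hml => by simp [Equiv.swap_apply_of_ne_of_ne hmj hml]
          rcases le_or_gt (b i) (b l) with hc | hc
          · refine cross_leaf l hij hli hlj ih hseg b (seg_self i j b)
              (b i) (b l) (b j) (by rw [hEi, hEj]; omega) (by rw [hEi, hEj]; omega) hEl
              (keyStep_swap hjl hlt ?_ ?_ ?_) hEo
            · simp [set3, hne.symm]
            · simp [set3, hli, hlj]
            · intro m hmj hml
              rcases eq_or_ne m i with rfl | hmi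
              · simp [set3]
              · simp [set3, hmi, hmj, hml]
          · refine cross_leaf l hij hli hlj ih hseg _ (seg_swap2 hne b)
              (b l) (b i) (b j) (by rw [hEi, hEj]; omega) (by rw [hEi, hEj]; omega) hEl
              (keyStep_swap hil ?_ ?_ ?_ ?_) hEo
            · simpa [set2, hne.symm, hli, hlj] using hlt
            · simp [set3, set2, hli, hlj]
            · simp [set3, set2, hli, hlj, hne.symm]
            · intro m hmi hml
              rcases eq_or_ne m j with rfl | hmj
              · simp [set3, set2, hne.symm]
              · simp [set3, set2, hmi, hmj, hml]
        · have hEj : Function.update (Function.update b j (b j + 1)) l (b l - 1) j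
              = b j + 1 := by simp [Function.update_apply, ne_of_lt hjl]
          have hEl : Function.update (Function.update b j (b j + 1)) l (b l - 1) l
              = b l - 1 := by simp
          have hEi : Function.update (Function.update b j (b j + 1)) l (b l - 1) i
              = b i := by simp [Function.update_apply, hne, (ne_of_lt hil)]
          have hEo : ∀ m, m ≠ i → m ≠ j → m ≠ l →
              Function.update (Function.update b j (b j + 1)) l (b l - 1) m = b m :=
            fun m _ hmj hml => by simp [Function.update_apply, hmj, hml]
          rcases le_or_gt (b i) (b j + 1) with hc | hc
          · refine cross_leaf l hij hli hlj ih hseg b (seg_self i j b)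
              (b i) (b j + 1) (b l - 1) (by rw [hEi, hEj]; omega) (by rw [hEi, hEj]; omega)
              hEl (keyStep_move hjl hlt ?_ ?_ ?_) hEo
            · simp [set3, hne.symm]
            · simp [set3, hli, hlj]
            · intro m hmj hml
              rcases eq_or_ne m i with rfl | hmi
              · simp [set3]
              · simp [set3, hmi, hmj, hml]
          · refine cross_leaf l hij hli hlj ih hseg _ (seg_swap2 hne b)
              (b j + 1) (b i) (b l - 1) (by rw [hEi, hEj]; omega) (by rw [hEi, hEj]; omega)
              hEl (keyStep_move hil ?_ ?_ ?_ ?_) hEo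
            · simp [set2, hne.symm, hli, hlj]; omega
            · simp [set3, set2, hli, hlj]
            · simp [set3, set2, hli, hlj, hne.symm]
            · intro m hmi hml
              rcases eq_or_ne m j with rfl | hmj
              · simp [set3, set2, hne.symm]
              · simp [set3, set2, hmi, hmj, hml]
      · have hkj : k ≠ j := Ne.symm hjk2
        rcases eq_or_ne i l with rfl | hil2
        · -- P3 : pair (c, i) with c = k < i
          have hki' : k ≠ i := hklne
          have hkj' : k ≠ j := hkj
          have hkj2 : k < j := lt_trans hkl hij
          rcases hmv with ⟨hlt, rfl⟩ | ⟨hlt, rfl⟩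
          · have hEk : (b ∘ Equiv.swap k i) k = b i := by simp
            have hEi : (b ∘ Equiv.swap k i) i = b k := by simp
            have hEj : (b ∘ Equiv.swap k i) j = b j := by
              simp [Equiv.swap_apply_of_ne_of_ne (Ne.symm hkj') hne.symm]
            have hEo : ∀ m, m ≠ i → m ≠ j → m ≠ k → (b ∘ Equiv.swap k i) m = b m :=
              fun m hmi _ hmk => by simp [Equiv.swap_apply_of_ne_of_ne hmk hmi]
            rcases le_or_gt (b k) (b j) with hc | hc
            · refine cross_leaf k hij hki' hkj' ih hseg b (seg_self i j b)
                (b k) (b j) (b i) (by rw [hEi, hEj]; omega) (by rw [hEi, hEj]; omega) hEk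
                (keyStep_swap hkl hlt ?_ ?_ ?_) hEo
              · simp [set3, hki', hkj']
              · simp [set3]
              · intro m hmk hmi
                rcases eq_or_ne m j with rfl | hmj
                · simp [set3, hne.symm]
                · simp [set3, hmi, hmj, hmk]
            · refine cross_leaf k hij hki' hkj' ih hseg _ (seg_swap2 hne b)
                (b j) (b k) (b i) (by rw [hEi, hEj]; omega) (by rw [hEi, hEj]; omega) hEk
                (keyStep_swap hkj2 ?_ ?_ ?_ ?_) hEo
              · simpa [set2, hki', hkj', hne.symm] using hlt
              · simp [set3, set2, hki', hkj', hne.symm]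
              · simp [set3, set2, hki', hkj', hne.symm]
              · intro m hmk hmj
                rcases eq_or_ne m i with rfl | hmi
                · simp [set3, set2]
                · simp [set3, set2, hmi, hmj, hmk]
          · have hEk : Function.update (Function.update b k (b k + 1)) i (b i - 1) k
                = b k + 1 := by simp [Function.update_apply, hki']
            have hEi : Function.update (Function.update b k (b k + 1)) i (b i - 1) i
                = b i - 1 := by simp
            have hEj : Function.update (Function.update b k (b k + 1)) i (b i - 1) j
                = b j := by simp [Function.update_apply, hne.symm, hkj'.symm]
            have hEo : ∀ m, m ≠ i → m ≠ j → m ≠ k →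
                Function.update (Function.update b k (b k + 1)) i (b i - 1) m = b m :=
              fun m hmi _ hmk => by simp [Function.update_apply, hmi, hmk]
            rcases le_or_gt (b i - 1) (b j) with hc | hc
            · refine cross_leaf k hij hki' hkj' ih hseg b (seg_self i j b)
                (b i - 1) (b j) (b k + 1) (by rw [hEi, hEj]; omega) (by rw [hEi, hEj]; omega)
                hEk (keyStep_move hkl hlt ?_ ?_ ?_) hEo
              · simp [set3, hki', hkj']
              · simp [set3]
              · intro m hmk hmi
                rcases eq_or_ne m j with rfl | hmj
                · simp [set3, hne.symm]
                · simp [set3, hmi, hmj, hmk]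
            · refine cross_leaf k hij hki' hkj' ih hseg _ (seg_swap2 hne b)
                (b j) (b i - 1) (b k + 1) (by rw [hEi, hEj]; omega) (by rw [hEi, hEj]; omega)
                hEk (keyStep_move hkj2 ?_ ?_ ?_ ?_) hEo
              · simp [set2, hki', hkj', hne.symm]; omega
              · simp [set3, set2, hki', hkj']
              · simp [set3, set2, hki', hkj', hne.symm]
              · intro m hmk hmj
                rcases eq_or_ne m i with rfl | hmi
                · simp [set3, set2]
                · simp [set3, set2, hmi, hmj, hmk]
        · have hli : l ≠ i := Ne.symm hil2
          rcases eq_or_ne j l with rfl | hjl2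
          · -- P4 : pair (c, j) with c = k, k < i
            have hki2 : k < i := by
              rw [Fin.lt_def] at hkl ⊢
              have : (k : ℕ) ≠ (i : ℕ) := fun h => hki (Fin.ext h)
              omega
            have hkj' : k ≠ j := hklne
            rcases hmv with ⟨hlt, rfl⟩ | ⟨hlt, rfl⟩
            · have hEk : (b ∘ Equiv.swap k j) k = b j := by simp
              have hEj : (b ∘ Equiv.swap k j) j = b k := by simp
              have hEi : (b ∘ Equiv.swap k j) i = b i := by
                simp [Equiv.swap_apply_of_ne_of_ne hki.symm hne]
              have hEo : ∀ m, m ≠ i → m ≠ j → m ≠ k → (b ∘ Equiv.swap k j) m = b m :=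
                fun m _ hmj hmk => by simp [Equiv.swap_apply_of_ne_of_ne hmk hmj]
              rcases le_or_gt (b i) (b k) with hc | hc
              · refine cross_leaf k hij hki hkj' ih hseg b (seg_self i j b)
                  (b i) (b k) (b j) (by rw [hEi, hEj]; omega) (by rw [hEi, hEj]; omega) hEk
                  (keyStep_swap hkl hlt ?_ ?_ ?_) hEo
                · simp [set3, hki, hkj', hne.symm]
                · simp [set3, hne.symm]
                · intro m hmk hmj
                  rcases eq_or_ne m i with rfl | hmi
                  · simp [set3]
                  · simp [set3, hmi, hmj, hmk]
              · refine cross_leaf k hij hki hkj' ih hseg _ (seg_swap2 hne b)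
                  (b k) (b i) (b j) (by rw [hEi, hEj]; omega) (by rw [hEi, hEj]; omega) hEk
                  (keyStep_swap hki2 ?_ ?_ ?_ ?_) hEo
                · simpa [set2, hki, hkj', hne.symm] using hlt
                · simp [set3, set2, hki, hkj']
                · simp [set3, set2, hki, hkj']
                · intro m hmk hmi
                  rcases eq_or_ne m j with rfl | hmj
                  · simp [set3, set2, hne.symm]
                  · simp [set3, set2, hmi, hmj, hmk]
            · have hEk : Function.update (Function.update b k (b k + 1)) j (b j - 1) k
                  = b k + 1 := by simp [Function.update_apply, hkj']
              have hEj : Function.update (Function.update b k (b k + 1)) j (b j - 1) j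
                  = b j - 1 := by simp
              have hEi : Function.update (Function.update b k (b k + 1)) j (b j - 1) i
                  = b i := by simp [Function.update_apply, hne, hki.symm]
              have hEo : ∀ m, m ≠ i → m ≠ j → m ≠ k →
                  Function.update (Function.update b k (b k + 1)) j (b j - 1) m = b m :=
                fun m _ hmj hmk => by simp [Function.update_apply, hmj, hmk]
              rcases le_or_gt (b i) (b j - 1) with hc | hc
              · refine cross_leaf k hij hki hkj' ih hseg b (seg_self i j b)
                  (b i) (b j - 1) (b k + 1) (by rw [hEi, hEj]; omega)
                  (by rw [hEi, hEj]; omega) hEk (keyStep_move hkl hlt ?_ ?_ ?_) hEo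
                · simp [set3, hki, hkj']
                · simp [set3, hne.symm]
                · intro m hmk hmj
                  rcases eq_or_ne m i with rfl | hmi
                  · simp [set3]
                  · simp [set3, hmi, hmj, hmk]
              · refine cross_leaf k hij hki hkj' ih hseg _ (seg_swap2 hne b)
                  (b j - 1) (b i) (b k + 1) (by rw [hEi, hEj]; omega)
                  (by rw [hEi, hEj]; omega) hEk (keyStep_move hki2 ?_ ?_ ?_ ?_) hEo
                · simp [set2, hki, hkj', hne.symm]; omega
                · simp [set3, set2, hki, hkj']
                · simp [set3, set2, hki, hkj']
                · intro m hmk hmi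
                  rcases eq_or_ne m j with rfl | hmj
                  · simp [set3, set2, hne.symm]
                  · simp [set3, set2, hmi, hmj, hmk]
          · -- D : disjoint
            have hlj : l ≠ j := Ne.symm hjl2
            obtain ⟨hoff, hsum, hmin, hmax⟩ := hseg
            rcases hmv with ⟨hlt, rfl⟩ | ⟨hlt, rfl⟩
            · have hEi : (b ∘ Equiv.swap k l) i = b i := by
                simp [Equiv.swap_apply_of_ne_of_ne (Ne.symm hki) (Ne.symm hli)]
              have hEj : (b ∘ Equiv.swap k l) j = b j := by
                simp [Equiv.swap_apply_of_ne_of_ne (Ne.symm hkj) (Ne.symm hlj)]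
              rw [hEi, hEj] at hsum hmin hmax
              have h0 : Seg i j b (set2 b i j (β i) (β j)) := by
                refine ⟨fun m hmi hmj => by simp [set2, hmi, hmj], ?_, ?_, ?_⟩ <;>
                  simp [set2, hne.symm] <;> omega
              refine Relation.ReflTransGen.tail (ih _ h0) (keyStep_swap hkl ?_ ?_ ?_ ?_)
              · simpa [set2, hki, hkj, hli, hlj] using hlt
              · rw [hoff k hki hkj]
                simp [set2, hki, hkj, hli, hlj]
              · rw [hoff l hli hlj]
                simp [set2, hki, hkj, hli, hlj]
              · intro m hmk hml
                rcases eq_or_ne m i with rfl | hmi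
                · simp [set2]
                rcases eq_or_ne m j with rfl | hmj
                · simp [set2, hne.symm]
                · rw [hoff m hmi hmj]
                  simp [set2, hmi, hmj, Equiv.swap_apply_of_ne_of_ne hmk hml]
            · have hEi : Function.update (Function.update b k (b k + 1)) l (b l - 1) i
                  = b i := by simp [Function.update_apply, Ne.symm hki, Ne.symm hli]
              have hEj : Function.update (Function.update b k (b k + 1)) l (b l - 1) j
                  = b j := by simp [Function.update_apply, Ne.symm hkj, Ne.symm hlj]
              rw [hEi, hEj] at hsum hmin hmax
              have h0 : Seg i j b (set2 b i j (β i) (β j)) := by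
                refine ⟨fun m hmi hmj => by simp [set2, hmi, hmj], ?_, ?_, ?_⟩ <;>
                  simp [set2, hne.symm] <;> omega
              refine Relation.ReflTransGen.tail (ih _ h0) (keyStep_move hkl ?_ ?_ ?_ ?_)
              · simpa [set2, hki, hkj, hli, hlj] using hlt
              · rw [hoff k hki hkj]
                simp [set2, hki, hkj, Function.update_apply, hklne]
              · rw [hoff l hli hlj]
                simp [set2, hli, hlj, Function.update_apply]
              · intro m hmk hml
                rcases eq_or_ne m i with rfl | hmi
                · simp [set2]
                rcases eq_or_ne m j with rfl | hmj
                · simp [set2, hne.symm]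
                · rw [hoff m hmi hmj]
                  simp [set2, hmi, hmj, Function.update_apply, hmk, hml]

section Algebra
open MvPolynomial

variable {n : ℕ} {i j : Fin n}

noncomputable def upd2 (d : Fin n →₀ ℕ) (i j : Fin n) (p q : ℕ) : Fin n →₀ ℕ :=
  Finsupp.update (Finsupp.update d i p) j q

lemma upd2_apply_i (hne : i ≠ j) (d : Fin n →₀ ℕ) (p q : ℕ) : upd2 d i j p q i = p := by
  simp [upd2, Finsupp.coe_update, Function.update_apply, hne]

lemma upd2_apply_j (d : Fin n →₀ ℕ) (p q : ℕ) : upd2 d i j p q j = q := by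
  simp [upd2]

lemma upd2_apply (d : Fin n →₀ ℕ) (p q : ℕ) (m : Fin n) (hmi : m ≠ i) (hmj : m ≠ j) :
    upd2 d i j p q m = d m := by
  simp [upd2, Finsupp.coe_update, Function.update_apply, hmi, hmj]

lemma upd2_congr (d : Fin n →₀ ℕ) {p q p' q' : ℕ} (hp : p = p') (hq : q = q') :
    upd2 d i j p q = upd2 d i j p' q' := by rw [hp, hq]

lemma X_mul_mon (d : Fin n →₀ ℕ) (c : ℤ) (k : Fin n) :
    X k * monomial d c = monomial (Finsupp.single k 1 + d) c := by
  rw [X, monomial_mul, one_mul]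

lemma single_i_add_upd2 (hne : i ≠ j) (d : Fin n →₀ ℕ) (p q : ℕ) :
    Finsupp.single i 1 + upd2 d i j p q = upd2 d i j (p + 1) q := by
  ext m
  rw [Finsupp.add_apply]
  rcases eq_or_ne m i with rfl | hmi
  · rw [upd2_apply_i hne, upd2_apply_i hne, Finsupp.single_eq_same]; omega
  rcases eq_or_ne m j with rfl | hmj
  · rw [upd2_apply_j, upd2_apply_j, Finsupp.single_eq_of_ne' hne]; omega
  · rw [upd2_apply _ _ _ _ hmi hmj, upd2_apply _ _ _ _ hmi hmj,
      Finsupp.single_eq_of_ne' (Ne.symm hmi)]; omega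

lemma single_j_add_upd2 (hne : i ≠ j) (d : Fin n →₀ ℕ) (p q : ℕ) :
    Finsupp.single j 1 + upd2 d i j p q = upd2 d i j p (q + 1) := by
  ext m
  rw [Finsupp.add_apply]
  rcases eq_or_ne m i with rfl | hmi
  · rw [upd2_apply_i hne, upd2_apply_i hne, Finsupp.single_eq_of_ne' (Ne.symm hne)]; omega
  rcases eq_or_ne m j with rfl | hmj
  · rw [upd2_apply_j, upd2_apply_j, Finsupp.single_eq_same]; omega
  · rw [upd2_apply _ _ _ _ hmi hmj, upd2_apply _ _ _ _ hmi hmj,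
      Finsupp.single_eq_of_ne' (Ne.symm hmj)]; omega

lemma upd2_eq_single_add (hne : i ≠ j) (d : Fin n →₀ ℕ) :
    upd2 d i j (d i + 1) (d j) = Finsupp.single i 1 + d := by
  ext m
  rw [Finsupp.add_apply]
  rcases eq_or_ne m i with rfl | hmi
  · rw [upd2_apply_i hne, Finsupp.single_eq_same]; omega
  rcases eq_or_ne m j with rfl | hmj
  · rw [upd2_apply_j, Finsupp.single_eq_of_ne' hne]; omega
  · rw [upd2_apply _ _ _ _ hmi hmj, Finsupp.single_eq_of_ne' (Ne.symm hmi)]; omega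

lemma mapDomain_swap_apply (d : Fin n →₀ ℕ) (x : Fin n) :
    Finsupp.mapDomain (⇑(Equiv.swap i j)) d x = d (Equiv.swap i j x) := by
  conv_lhs => rw [← Equiv.swap_apply_self i j x]
  rw [Finsupp.mapDomain_apply (Equiv.injective _)]

lemma mapDomain_swap_single_add (hne : i ≠ j) (d : Fin n →₀ ℕ) :
    Finsupp.mapDomain (⇑(Equiv.swap i j)) (Finsupp.single i 1 + d)
      = upd2 d i j (d j) (d i + 1) := by
  ext m
  rw [mapDomain_swap_apply]
  rcases eq_or_ne m i with rfl | hmi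
  · rw [Equiv.swap_apply_left, Finsupp.add_apply, Finsupp.single_eq_of_ne' hne,
      upd2_apply_i hne]; omega
  rcases eq_or_ne m j with rfl | hmj
  · rw [Equiv.swap_apply_right, Finsupp.add_apply, Finsupp.single_eq_same, upd2_apply_j]; omega
  · rw [Equiv.swap_apply_of_ne_of_ne hmi hmj, Finsupp.add_apply,
      Finsupp.single_eq_of_ne' (Ne.symm hmi), upd2_apply _ _ _ _ hmi hmj]; omega

noncomputable def Qpoly (i j : Fin n) (d : Fin n →₀ ℕ) : MvPolynomial (Fin n) ℤ :=
  if d j ≤ d i then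
    ∑ t ∈ Finset.range (d i + 1 - d j), monomial (upd2 d i j (d j + t) (d i - t)) 1
  else
    - ∑ t ∈ Finset.range (d j - d i - 1), monomial (upd2 d i j (d i + 1 + t) (d j - 1 - t)) 1

lemma Qpoly_mul (hne : i ≠ j) (d : Fin n →₀ ℕ) :
    (X i - X j) * Qpoly i j d =
      monomial (Finsupp.single i 1 + d) 1 -
        rename (Equiv.swap i j) (monomial (Finsupp.single i 1 + d) (1 : ℤ)) := by
  rw [rename_monomial, mapDomain_swap_single_add hne]
  rw [Qpoly]
  split_ifs with hle
  · set f : ℕ → MvPolynomial (Fin n) ℤ :=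
      fun t => monomial (upd2 d i j (d j + t) (d i + 1 - t)) 1 with hf
    have key : ∀ t ∈ Finset.range (d i + 1 - d j),
        (X i - X j) * monomial (upd2 d i j (d j + t) (d i - t)) (1 : ℤ) = f (t + 1) - f t := by
      intro t ht
      rw [Finset.mem_range] at ht
      rw [sub_mul, X_mul_mon, X_mul_mon, single_i_add_upd2 hne, single_j_add_upd2 hne, hf]
      rw [upd2_congr d (show d j + t + 1 = d j + (t + 1) by omega)
        (show d i - t = d i + 1 - (t + 1) by omega),
        upd2_congr d (rfl : d j + t = d j + t) (show d i - t + 1 = d i + 1 - t by omega)]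
    rw [Finset.mul_sum, Finset.sum_congr rfl key, Finset.sum_range_sub f]
    have hfm : f (d i + 1 - d j) = monomial (Finsupp.single i 1 + d) 1 := by
      simp only [hf]
      rw [upd2_congr d (show d j + (d i + 1 - d j) = d i + 1 by omega)
        (show d i + 1 - (d i + 1 - d j) = d j by omega), upd2_eq_single_add hne]
    have hf0 : f 0 = monomial (upd2 d i j (d j) (d i + 1)) 1 := by
      simp only [hf]
      rw [upd2_congr d (show d j + 0 = d j by omega) (show d i + 1 - 0 = d i + 1 by omega)]
    rw [hfm, hf0]
  · push_neg at hle
    set g : ℕ → MvPolynomial (Fin n) ℤ :=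
      fun t => monomial (upd2 d i j (d i + 1 + t) (d j - t)) 1 with hg
    have key : ∀ t ∈ Finset.range (d j - d i - 1),
        (X i - X j) * monomial (upd2 d i j (d i + 1 + t) (d j - 1 - t)) (1 : ℤ)
          = g (t + 1) - g t := by
      intro t ht
      rw [Finset.mem_range] at ht
      rw [sub_mul, X_mul_mon, X_mul_mon, single_i_add_upd2 hne, single_j_add_upd2 hne, hg]
      rw [upd2_congr d (show d i + 1 + t + 1 = d i + 1 + (t + 1) by omega)
        (show d j - 1 - t = d j - (t + 1) by omega),
        upd2_congr d (rfl : d i + 1 + t = d i + 1 + t)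
          (show d j - 1 - t + 1 = d j - t by omega)]
    rw [mul_neg, Finset.mul_sum, Finset.sum_congr rfl key, Finset.sum_range_sub g,
      neg_sub]
    have hg0 : g 0 = monomial (Finsupp.single i 1 + d) 1 := by
      simp only [hg]
      rw [upd2_congr d (show d i + 1 + 0 = d i + 1 by omega) (show d j - 0 = d j by omega),
        upd2_eq_single_add hne]
    have hgm : g (d j - d i - 1) = monomial (upd2 d i j (d j) (d i + 1)) 1 := by
      simp only [hg]
      rw [upd2_congr d (show d i + 1 + (d j - d i - 1) = d j by omega)
        (show d j - (d j - d i - 1) = d i + 1 by omega)]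
    rw [hg0, hgm]

lemma exists_seg (hne : i ≠ j) (g p : MvPolynomial (Fin n) ℤ)
    (hrec : (X i - X j) * p = X i * g - rename (Equiv.swap i j) (X i * g))
    (β : Fin n →₀ ℕ) (hβ : coeff β p ≠ 0) :
    ∃ d ∈ g.support, Seg i j (⇑d) ⇑β := by
  classical
  set P : MvPolynomial (Fin n) ℤ := ∑ d ∈ g.support, C (coeff d g) * Qpoly i j d with hP
  have hXg : ∑ d ∈ g.support, monomial (Finsupp.single i 1 + d) (coeff d g) = X i * g := by
    conv_rhs => rw [← support_sum_monomial_coeff g]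
    rw [Finset.mul_sum]
    exact Finset.sum_congr rfl fun d _ => (X_mul_mon d (coeff d g) i).symm
  have hmul : (X i - X j) * P = X i * g - rename (Equiv.swap i j) (X i * g) := by
    rw [hP, Finset.mul_sum]
    have : ∀ d ∈ g.support, (X i - X j) * (C (coeff d g) * Qpoly i j d)
        = monomial (Finsupp.single i 1 + d) (coeff d g)
          - rename (Equiv.swap i j) (monomial (Finsupp.single i 1 + d) (coeff d g)) := by
      intro d _
      rw [show (X i - X j) * (C (coeff d g) * Qpoly i j d)
          = C (coeff d g) * ((X i - X j) * Qpoly i j d) from by ring, Qpoly_mul hne,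
        show (monomial (Finsupp.single i 1 + d) (coeff d g) : MvPolynomial (Fin n) ℤ)
          = C (coeff d g) * monomial (Finsupp.single i 1 + d) 1 from by
            rw [C_mul_monomial, mul_one],
        map_mul, rename_C, mul_sub]
    rw [Finset.sum_congr rfl this, Finset.sum_sub_distrib, ← map_sum, hXg]
  have hXne : (X i - X j : MvPolynomial (Fin n) ℤ) ≠ 0 := by
    intro h
    exact hne (X_injective (sub_eq_zero.mp h))
  have hpP : p = P := mul_left_cancel₀ hXne (hrec.trans hmul.symm)
  rw [hpP, hP, coeff_sum] at hβ
  obtain ⟨d, hd, hcd⟩ := Finset.exists_ne_zero_of_sum_ne_zero hβ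
  refine ⟨d, hd, ?_⟩
  rw [coeff_C_mul] at hcd
  have hq : coeff β (Qpoly i j d) ≠ 0 := fun h => hcd (by rw [h, mul_zero])
  rw [Qpoly] at hq
  split_ifs at hq with hle
  · rw [coeff_sum] at hq
    obtain ⟨t, ht, hct⟩ := Finset.exists_ne_zero_of_sum_ne_zero hq
    rw [Finset.mem_range] at ht
    rw [coeff_monomial] at hct
    have hupd : upd2 d i j (d j + t) (d i - t) = β := by
      by_contra h; exact hct (if_neg h)
    have hβi : (β : Fin n → ℕ) i = d j + t := by rw [← hupd, upd2_apply_i hne]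
    have hβj : (β : Fin n → ℕ) j = d i - t := by rw [← hupd, upd2_apply_j]
    exact ⟨fun m hmi hmj => by rw [← hupd, upd2_apply _ _ _ _ hmi hmj],
      by omega, by omega, by omega⟩
  · push_neg at hle
    rw [coeff_neg, neg_ne_zero, coeff_sum] at hq
    obtain ⟨t, ht, hct⟩ := Finset.exists_ne_zero_of_sum_ne_zero hq
    rw [Finset.mem_range] at ht
    rw [coeff_monomial] at hct
    have hupd : upd2 d i j (d i + 1 + t) (d j - 1 - t) = β := by
      by_contra h; exact hct (if_neg h)
    have hβi : (β : Fin n → ℕ) i = d i + 1 + t := by rw [← hupd, upd2_apply_i hne]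
    have hβj : (β : Fin n → ℕ) j = d j - 1 - t := by rw [← hupd, upd2_apply_j]
    exact ⟨fun m hmi hmj => by rw [← hupd, upd2_apply _ _ _ _ hmi hmj],
      by omega, by omega, by omega⟩

end Algebra

section Glue
open MvPolynomial

variable {n : ℕ}

lemma exists_adjacent {α : Fin n → ℕ} (h : ¬ ∀ i j : Fin n, i ≤ j → α j ≤ α i) :
    ∃ i j : Fin n, (i : ℕ) + 1 = (j : ℕ) ∧ α i < α j := by
  by_contra hadj
  push_neg at hadj
  push_neg at h
  obtain ⟨i, j, hle, hlt⟩ := h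
  have key : ∀ (d : ℕ) (a b : Fin n), (a : ℕ) + d = (b : ℕ) → α b ≤ α a := by
    intro d
    induction d with
    | zero =>
      intro a b hd
      have : a = b := Fin.ext (by omega)
      rw [this]
    | succ d ihd =>
      intro a b hd
      have hlt' : (a : ℕ) + d < n := by have := b.isLt; omega
      set k : Fin n := ⟨(a : ℕ) + d, hlt'⟩ with hk
      have h1 : α k ≤ α a := ihd a k rfl
      have h2 : α b ≤ α k := hadj k b (by rw [hk]; simp; omega)
      exact le_trans h2 h1
  have hji : α j ≤ α i := key ((j : ℕ) - (i : ℕ)) i j (by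
    have := Fin.le_def.mp hle
    omega)
  omega

lemma measure_swap_lt {i j : Fin n} (hij : i < j) (α : Fin n → ℕ) (hα : α i < α j) :
    ∑ m : Fin n, (m : ℕ) * (α ∘ Equiv.swap i j) m < ∑ m : Fin n, (m : ℕ) * α m := by
  classical
  have hne : i ≠ j := ne_of_lt hij
  have hjmem : j ∈ Finset.univ.erase i := Finset.mem_erase.mpr ⟨hne.symm, Finset.mem_univ j⟩
  have h1 : ∀ f : Fin n → ℕ, ∑ m : Fin n, (m : ℕ) * f m
      = (i : ℕ) * f i + ((j : ℕ) * f j + ∑ m ∈ (Finset.univ.erase i).erase j, (m : ℕ) * f m) := by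
    intro f
    rw [← Finset.add_sum_erase _ _ (Finset.mem_univ i), ← Finset.add_sum_erase _ _ hjmem]
  rw [h1 α, h1 (α ∘ Equiv.swap i j)]
  have hrest : ∑ m ∈ (Finset.univ.erase i).erase j, (m : ℕ) * (α ∘ Equiv.swap i j) m
      = ∑ m ∈ (Finset.univ.erase i).erase j, (m : ℕ) * α m := by
    refine Finset.sum_congr rfl fun m hm => ?_
    rw [Finset.mem_erase, Finset.mem_erase] at hm
    simp [Equiv.swap_apply_of_ne_of_ne hm.2.1 hm.1]
  rw [hrest]
  have e1 : (α ∘ Equiv.swap i j) i = α j := by simp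
  have e2 : (α ∘ Equiv.swap i j) j = α i := by simp
  rw [e1, e2]
  have hijv : (i : ℕ) < (j : ℕ) := hij
  obtain ⟨a, ha⟩ := Nat.exists_eq_add_of_lt hijv
  obtain ⟨c, hc⟩ := Nat.exists_eq_add_of_lt hα
  rw [ha, hc]
  ring_nf
  omega

lemma prod_X_pow (α : Fin n → ℕ) :
    (∏ m, X m ^ α m : MvPolynomial (Fin n) ℤ)
      = monomial (Finsupp.equivFunOnFinite.symm α) 1 := by
  rw [← prod_X_pow_eq_monomial]
  refine (Finset.prod_subset (Finset.subset_univ _) ?_).symm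
  intro x _ hx
  simp at hx
  simp [hx]

lemma key_support (κ : (Fin n → ℕ) → MvPolynomial (Fin n) ℤ) (hκ : IsKeyFamily n κ) :
    ∀ (N : ℕ) (α : Fin n → ℕ), (∑ m : Fin n, (m : ℕ) * α m) < N →
      ∀ β : Fin n → ℕ, coeff (Finsupp.equivFunOnFinite.symm β) (κ α) ≠ 0 → KeyLe n β α := by
  intro N
  induction N with
  | zero => intro α h; exact absurd h (Nat.not_lt_zero _)
  | succ N ih =>
    intro α hμ β hβ
    by_cases hdec : ∀ i j : Fin n, i ≤ j → α j ≤ α i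
    · rw [hκ.1 α hdec, prod_X_pow, coeff_monomial] at hβ
      have heq : Finsupp.equivFunOnFinite.symm α = Finsupp.equivFunOnFinite.symm β := by
        by_contra h
        exact hβ (if_neg h)
      have : α = β := Finsupp.equivFunOnFinite.symm.injective heq
      rw [← this]
      exact Relation.ReflTransGen.refl
    · obtain ⟨i, j, hij1, hα⟩ := exists_adjacent hdec
      have hij : i < j := by rw [Fin.lt_def]; omega
      have hne : i ≠ j := ne_of_lt hij
      have hrec := hκ.2 α i j hij1 hα
      simp only [swapVars] at hrec
      obtain ⟨d, hd, hseg⟩ :=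
        exists_seg hne (κ (α ∘ Equiv.swap i j)) (κ α) hrec _ hβ
      have hδle : KeyLe n ⇑d (α ∘ Equiv.swap i j) := by
        refine ih (α ∘ Equiv.swap i j) ?_ ⇑d ?_
        · have := measure_swap_lt hij α hα
          omega
        · rw [Finsupp.equivFunOnFinite_symm_coe]
          exact Finsupp.mem_support_iff.mp hd
      exact claimC hij1 α hα hδle _ hseg

end Glue

end KeyAux


/-- If `β` is an exponent vector of the key polynomial `κ α`, then `β ≤_κ α`. -/
theorem keyLe_of_exponent_vector (n : ℕ) (hn : 1 ≤ n)
    (κ : (Fin n → ℕ) → MvPolynomial (Fin n) ℤ) (hκ : IsKeyFamily n κ)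
    (α β : Fin n → ℕ)
    (hβ : MvPolynomial.coeff (Finsupp.equivFunOnFinite.symm β) (κ α) ≠ 0) :
    KeyLe n β α :=
  KeyAux.key_support κ hκ ((∑ m : Fin n, (m : ℕ) * α m) + 1) α (Nat.lt_succ_self _) β hβ
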